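/- Define V(n) = Σ_{j=0}^{2n} (-4)ʲ · C(3n+1, n+j+1) for nonnegative integers n. Then for every nonnegative integer n, -27·V(n) + 4·V(n+1) = -3 · (3n+1)! / ((2n+1)! · (n+1)!), where the identity is stated in the rationals ℚ. -/

import Mathlib

/-- Auxiliary sum: `∑ j < m, (-4)^j * C(N, a+j)` over ℚ. -/
def Ssum (N a m : ℕ) : ℚ :=
  ∑ j ∈ Finset.range m, (-4 : ℚ) ^ j * (Nat.choose N (a + j) : ℚ)

lemma Ssum_congr {N N' a a' m m' : ℕ} (hN : N = N') (ha : a = a') (hm : m = m') :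
    Ssum N a m = Ssum N' a' m' := by subst hN; subst ha; subst hm; rfl

lemma Ssum_peel (N a m : ℕ) :
    Ssum N a (m + 1) = (Nat.choose N a : ℚ) - 4 * Ssum N (a + 1) m := by
  unfold Ssum
  rw [Finset.sum_range_succ']
  have h : ∀ i ∈ Finset.range m, (-4 : ℚ) ^ (i + 1) * (Nat.choose N (a + (i + 1)) : ℚ)
      = (-4) * ((-4 : ℚ) ^ i * (Nat.choose N (a + 1 + i) : ℚ)) := by
    intro i _
    have h2 : a + (i + 1) = a + 1 + i := by omega
    rw [h2, pow_succ]; ring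
  rw [Finset.sum_congr rfl h, ← Finset.mul_sum]
  simp only [pow_zero, one_mul, add_zero]
  ring

lemma Ssum_stab (N a m k : ℕ) (h : N < a + m) :
    Ssum N a (m + k) = Ssum N a m := by
  induction k with
  | zero => rfl
  | succ k ih =>
    rw [show m + (k + 1) = (m + k) + 1 by omega]
    unfold Ssum
    rw [Finset.sum_range_succ, Nat.choose_eq_zero_of_lt (by omega)]
    simpa [Ssum] using ih

lemma Ssum_pasc (M a m : ℕ) :
    Ssum (M + 1) (a + 1) m = Ssum M a m + Ssum M (a + 1) m := by
  unfold Ssum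
  rw [← Finset.sum_add_distrib]
  refine Finset.sum_congr rfl ?_
  intro j _
  have h2 : a + 1 + j = (a + j) + 1 := by omega
  rw [h2, Nat.choose_succ_succ]
  push_cast
  ring

theorem ruehr_V_recurrence (V : ℕ → ℚ)
    (hV : ∀ n : ℕ, V n = ∑ j ∈ Finset.range (2 * n + 1), (-4 : ℚ) ^ j * (Nat.choose (3 * n + 1) (n + j + 1) : ℚ)) :
    ∀ n : ℕ, -27 * V n + 4 * V (n + 1) =
      -3 * (Nat.factorial (3 * n + 1) : ℚ) /
        ((Nat.factorial (2 * n + 1) : ℚ) * (Nat.factorial (n + 1) : ℚ)) := by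
  intro n
  -- restate hV in terms of Ssum
  have a1 : V n = Ssum (3*n+1) (n+1) (2*n+1) := by
    rw [hV n]; unfold Ssum
    refine Finset.sum_congr rfl ?_
    intro j _
    rw [show n+j+1 = n+1+j by omega]
  have a2 : V (n+1) = Ssum (3*n+4) (n+2) (2*n+3) := by
    rw [hV (n+1)]; unfold Ssum
    rw [show 2*(n+1)+1 = 2*n+3 by omega]
    refine Finset.sum_congr rfl ?_
    intro j _
    rw [show 3*(n+1)+1 = 3*n+4 by ring, show n+1+j+1 = n+2+j by omega]
  have a3 : Ssum (3*n+4) (n+2) (2*n+3)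
      = Ssum (3*n+3) (n+1) (2*n+3) + Ssum (3*n+3) (n+2) (2*n+3) := by
    rw [Ssum_congr (show 3*n+4 = (3*n+3)+1 by omega) (show n+2 = (n+1)+1 by omega) rfl,
      Ssum_pasc, Ssum_congr (rfl : 3*n+3 = 3*n+3) (show (n+1)+1 = n+2 by omega) rfl]
  have a4 : Ssum (3*n+3) (n+1) (2*n+3)
      = Ssum (3*n+2) n (2*n+3) + Ssum (3*n+2) (n+1) (2*n+3) := by
    rw [Ssum_congr (show 3*n+3 = (3*n+2)+1 by omega) (rfl : n+1 = n+1) rfl, Ssum_pasc]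
  have a5 : Ssum (3*n+3) (n+2) (2*n+3)
      = Ssum (3*n+2) (n+1) (2*n+3) + Ssum (3*n+2) (n+2) (2*n+3) := by
    rw [Ssum_congr (show 3*n+3 = (3*n+2)+1 by omega) (show n+2 = (n+1)+1 by omega) rfl,
      Ssum_pasc, Ssum_congr (rfl : 3*n+2 = 3*n+2) (show (n+1)+1 = n+2 by omega) rfl]
  have a6 : Ssum (3*n+2) n (2*n+3)
      = (Nat.choose (3*n+2) n : ℚ) - 4 * Ssum (3*n+2) (n+1) (2*n+2) := by
    rw [Ssum_congr (rfl : 3*n+2 = 3*n+2) (rfl : n = n) (show 2*n+3 = (2*n+2)+1 by omega),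
      Ssum_peel]
  have a7 : Ssum (3*n+2) (n+1) (2*n+3)
      = Ssum (3*n+1) n (2*n+3) + Ssum (3*n+1) (n+1) (2*n+3) := by
    rw [Ssum_congr (show 3*n+2 = (3*n+1)+1 by omega) (rfl : n+1 = n+1) rfl, Ssum_pasc]
  have a8 : Ssum (3*n+2) (n+1) (2*n+2)
      = Ssum (3*n+1) n (2*n+2) + Ssum (3*n+1) (n+1) (2*n+2) := by
    rw [Ssum_congr (show 3*n+2 = (3*n+1)+1 by omega) (rfl : n+1 = n+1) rfl, Ssum_pasc]
  have a9 : Ssum (3*n+2) (n+2) (2*n+3)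
      = Ssum (3*n+1) (n+1) (2*n+3) + Ssum (3*n+1) (n+2) (2*n+3) := by
    rw [Ssum_congr (show 3*n+2 = (3*n+1)+1 by omega) (show n+2 = (n+1)+1 by omega) rfl,
      Ssum_pasc, Ssum_congr (rfl : 3*n+1 = 3*n+1) (show (n+1)+1 = n+2 by omega) rfl]
  have a10 : Ssum (3*n+1) n (2*n+3)
      = (Nat.choose (3*n+1) n : ℚ) - 4 * Ssum (3*n+1) (n+1) (2*n+2) := by
    rw [Ssum_congr (rfl : 3*n+1 = 3*n+1) (rfl : n = n) (show 2*n+3 = (2*n+2)+1 by omega),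
      Ssum_peel]
  have a11 : Ssum (3*n+1) n (2*n+2)
      = (Nat.choose (3*n+1) n : ℚ) - 4 * Ssum (3*n+1) (n+1) (2*n+1) := by
    rw [Ssum_congr (rfl : 3*n+1 = 3*n+1) (rfl : n = n) (show 2*n+2 = (2*n+1)+1 by omega),
      Ssum_peel]
  have a12 : Ssum (3*n+1) (n+1) (2*n+2) = Ssum (3*n+1) (n+1) (2*n+1) := by
    rw [show 2*n+2 = (2*n+1)+1 by omega]
    exact Ssum_stab (3*n+1) (n+1) (2*n+1) 1 (by omega)
  have a13 : Ssum (3*n+1) (n+1) (2*n+3) = Ssum (3*n+1) (n+1) (2*n+1) := by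
    rw [show 2*n+3 = (2*n+1)+2 by omega]
    exact Ssum_stab (3*n+1) (n+1) (2*n+1) 2 (by omega)
  have a14 : Ssum (3*n+1) (n+1) (2*n+4) = Ssum (3*n+1) (n+1) (2*n+1) := by
    rw [show 2*n+4 = (2*n+1)+3 by omega]
    exact Ssum_stab (3*n+1) (n+1) (2*n+1) 3 (by omega)
  have a15 : Ssum (3*n+1) (n+1) (2*n+4)
      = (Nat.choose (3*n+1) (n+1) : ℚ) - 4 * Ssum (3*n+1) (n+2) (2*n+3) := by
    rw [Ssum_congr (rfl : 3*n+1 = 3*n+1) (rfl : n+1 = n+1) (show 2*n+4 = (2*n+3)+1 by omega),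
      Ssum_peel, Ssum_congr (rfl : 3*n+1 = 3*n+1) (show (n+1)+1 = n+2 by omega) rfl]
  -- binomial coefficients in terms of the factorial quotient
  set c : ℚ := (Nat.factorial (3*n+1) : ℚ)
      / ((Nat.factorial (2*n+1) : ℚ) * (Nat.factorial (n+1) : ℚ)) with hc
  have f1 : (Nat.factorial (2*n) : ℚ) ≠ 0 := Nat.cast_ne_zero.2 (Nat.factorial_ne_zero _)
  have f2 : (Nat.factorial (2*n+1) : ℚ) ≠ 0 := Nat.cast_ne_zero.2 (Nat.factorial_ne_zero _)
  have f3 : (Nat.factorial (n+1) : ℚ) ≠ 0 := Nat.cast_ne_zero.2 (Nat.factorial_ne_zero _)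
  have f4 : (Nat.factorial n : ℚ) ≠ 0 := Nat.cast_ne_zero.2 (Nat.factorial_ne_zero _)
  have f5 : (Nat.factorial (2*n+2) : ℚ) ≠ 0 := Nat.cast_ne_zero.2 (Nat.factorial_ne_zero _)
  have g1 : (Nat.factorial (2*n+1) : ℚ) = (2*n+1) * (Nat.factorial (2*n) : ℚ) := by
    rw [show 2*n+1 = (2*n)+1 by rfl, Nat.factorial_succ]; push_cast; ring
  have g2 : (Nat.factorial (n+1) : ℚ) = (n+1) * (Nat.factorial n : ℚ) := by
    rw [Nat.factorial_succ]; push_cast; ring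
  have g3 : (Nat.factorial (2*n+2) : ℚ) = (2*n+2) * (Nat.factorial (2*n+1) : ℚ) := by
    rw [show 2*n+2 = (2*n+1)+1 by rfl, Nat.factorial_succ]; push_cast; ring
  have g4 : (Nat.factorial (3*n+2) : ℚ) = (3*n+2) * (Nat.factorial (3*n+1) : ℚ) := by
    rw [show 3*n+2 = (3*n+1)+1 by rfl, Nat.factorial_succ]; push_cast; ring
  have b1 : (Nat.choose (3*n+1) (n+1) : ℚ) = (2*n+1) * c := by
    rw [Nat.cast_choose ℚ (show n+1 ≤ 3*n+1 by omega), show 3*n+1 - (n+1) = 2*n by omega,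
      hc, g1]
    field_simp
  have b2 : (Nat.choose (3*n+1) n : ℚ) = (n+1) * c := by
    rw [Nat.cast_choose ℚ (show n ≤ 3*n+1 by omega), show 3*n+1 - n = 2*n+1 by omega,
      hc, g2]
    field_simp
  have b3 : 2 * (Nat.choose (3*n+2) n : ℚ) = (3*n+2) * c := by
    rw [Nat.cast_choose ℚ (show n ≤ 3*n+2 by omega), show 3*n+2 - n = 2*n+2 by omega,
      hc, g4, g3, g2]
    field_simp
  rw [mul_div_assoc, ← hc]
  linarith [a1, a2, a3, a4, a5, a6, a7, a8, a9, a10, a11, a12, a13, a14, a15, b1, b2, b3]
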